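/- Let γ ∈ (0, 1/2) ∪ (1/2, 1) and θ > 0. Then as t → ∞, e^{-θt} ∫_0^t ∫_{-∞}^0 e^{θx} e^{θy} (y-x)^{2γ-2} dx dy is asymptotically equivalent to t^{2γ-2}/θ², i.e. the ratio of the two quantities tends to 1. -/

import Mathlib

open MeasureTheory Real Set Filter Topology

namespace Stmt1Aux

/-- The inner integral after reflection. -/
noncomputable def g (θ α : ℝ) (y : ℝ) : ℝ :=
  ∫ u in Ioi (0:ℝ), Real.exp (-(θ*u)) * (y+u)^α

lemma integral_exp_rate {θ : ℝ} (hθ : 0 < θ) :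
    ∫ u in Ioi (0:ℝ), Real.exp (-(θ*u)) = θ⁻¹ := by
  have h := integral_comp_mul_left_Ioi (fun x => Real.exp (-x)) 0 hθ
  simp only [mul_zero] at h
  rw [h, integral_exp_neg_Ioi_zero, smul_eq_mul, mul_one]

lemma exp_rate_integrable {θ : ℝ} (hθ : 0 < θ) (a : ℝ) :
    IntegrableOn (fun u : ℝ => Real.exp (-(θ*u))) (Ioi a) := by
  simpa [neg_mul] using exp_neg_integrableOn_Ioi a hθ

lemma measurable_g (θ α : ℝ) : Measurable (g θ α) := by
  have h : StronglyMeasurable (fun p : ℝ × ℝ => Real.exp (-(θ*p.2)) * (p.1+p.2)^α) := by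
    refine Measurable.stronglyMeasurable ?_
    exact ((measurable_snd.const_mul θ).neg.exp).mul
      ((measurable_fst.add measurable_snd).pow measurable_const)
  exact h.integral_prod_right'.measurable

lemma integrand_integrable {θ α : ℝ} (hθ : 0 < θ) (hα : α ≤ 0) {y : ℝ} (hy : 0 < y) :
    IntegrableOn (fun u => Real.exp (-(θ*u)) * (y+u)^α) (Ioi (0:ℝ)) := by
  refine Integrable.mono' ((exp_rate_integrable hθ 0).const_mul (y^α)) ?_ ?_
  · refine (Measurable.aestronglyMeasurable ?_)
    exact ((measurable_id.const_mul θ).neg.exp).mul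
      ((measurable_const.add measurable_id).pow measurable_const)
  · filter_upwards [ae_restrict_mem measurableSet_Ioi] with u hu
    have h1 : (0:ℝ) < y + u := by simp at hu; linarith
    rw [Real.norm_eq_abs, abs_of_nonneg (mul_nonneg (Real.exp_pos _).le (Real.rpow_nonneg h1.le _))]
    rw [mul_comm (y^α)]
    exact mul_le_mul_of_nonneg_left
      (Real.rpow_le_rpow_of_nonpos hy (by simp at hu; linarith) hα) (Real.exp_pos _).le

lemma g_nonneg {θ α : ℝ} {y : ℝ} (hy : 0 ≤ y) : 0 ≤ g θ α y := by
  refine setIntegral_nonneg measurableSet_Ioi fun u hu => ?_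
  exact mul_nonneg (Real.exp_pos _).le (Real.rpow_nonneg (by simp at hu; linarith) _)

lemma g_le {θ α : ℝ} (hθ : 0 < θ) (hα : α ≤ 0) {y : ℝ} (hy : 0 < y) :
    g θ α y ≤ y^α * θ⁻¹ := by
  have h1 : g θ α y ≤ ∫ u in Ioi (0:ℝ), y^α * Real.exp (-(θ*u)) := by
    refine setIntegral_mono_on (integrand_integrable hθ hα hy)
      ((exp_rate_integrable hθ 0).const_mul _) measurableSet_Ioi fun u hu => ?_
    rw [mul_comm (y^α)]
    exact mul_le_mul_of_nonneg_left
      (Real.rpow_le_rpow_of_nonpos hy (by simp at hu; linarith) hα) (Real.exp_pos _).le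
  rwa [integral_const_mul, integral_exp_rate hθ] at h1

variable {θ α : ℝ}

lemma ratio_tendsto (u : ℝ) : Tendsto (fun s : ℝ => (s+u)/s) atTop (𝓝 1) := by
  have h : Tendsto (fun s : ℝ => 1 + u/s) atTop (𝓝 (1+0)) :=
    tendsto_const_nhds.add (tendsto_const_nhds.div_atTop tendsto_id)
  rw [add_zero] at h
  refine h.congr' ?_
  filter_upwards [eventually_gt_atTop (0:ℝ)] with s hs
  field_simp

lemma sub_ratio_tendsto (u : ℝ) : Tendsto (fun t : ℝ => (t-u)/t) atTop (𝓝 1) := by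
  have h : Tendsto (fun t : ℝ => 1 - u/t) atTop (𝓝 (1-0)) :=
    tendsto_const_nhds.sub (tendsto_const_nhds.div_atTop tendsto_id)
  rw [sub_zero] at h
  refine h.congr' ?_
  filter_upwards [eventually_gt_atTop (0:ℝ)] with t ht
  rw [sub_div, div_self ht.ne']

lemma g_tendsto (hθ : 0 < θ) (hα : α ≤ 0) :
    Tendsto (fun s => g θ α s * s^(-α)) atTop (𝓝 θ⁻¹) := by
  have key : Tendsto (fun s => ∫ u in Ioi (0:ℝ), Real.exp (-(θ*u)) * ((s+u)/s)^α)
      atTop (𝓝 θ⁻¹) := by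
    rw [← integral_exp_rate hθ]
    refine tendsto_integral_filter_of_dominated_convergence
      (fun u => Real.exp (-(θ*u))) ?_ ?_ (exp_rate_integrable hθ 0) ?_
    · filter_upwards with s
      refine Measurable.aestronglyMeasurable ?_
      exact ((measurable_id.const_mul θ).neg.exp).mul
        (((measurable_const.add measurable_id).div_const s).pow measurable_const)
    · filter_upwards [eventually_ge_atTop (1:ℝ)] with s hs
      filter_upwards [ae_restrict_mem measurableSet_Ioi] with u hu
      have hu0 : 0 < u := hu
      have h1 : (1:ℝ) ≤ (s+u)/s := by
        rw [le_div_iff₀ (by linarith)]; linarith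
      rw [Real.norm_eq_abs, abs_of_nonneg (mul_nonneg (Real.exp_pos _).le
        (Real.rpow_nonneg (by linarith) _))]
      calc Real.exp (-(θ*u)) * ((s+u)/s)^α
          ≤ Real.exp (-(θ*u)) * 1 :=
            mul_le_mul_of_nonneg_left (Real.rpow_le_one_of_one_le_of_nonpos h1 hα)
              (Real.exp_pos _).le
        _ = Real.exp (-(θ*u)) := mul_one _
    · filter_upwards [ae_restrict_mem measurableSet_Ioi] with u hu
      have h : Tendsto (fun s : ℝ => ((s+u)/s)^α) atTop (𝓝 1) := by
        have h2 := (ratio_tendsto u).rpow_const (p := α) (Or.inl one_ne_zero)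
        rwa [Real.one_rpow] at h2
      have h3 := (tendsto_const_nhds (x := Real.exp (-(θ*u)))).mul h
      rwa [mul_one] at h3
  refine key.congr' ?_
  filter_upwards [eventually_gt_atTop (0:ℝ)] with s hs
  rw [g, ← integral_mul_const]
  refine setIntegral_congr_fun measurableSet_Ioi fun u hu => ?_
  have hu0 : (0:ℝ) < u := hu
  rw [mul_assoc]
  congr 1
  rw [Real.div_rpow (by linarith) hs.le, Real.rpow_neg hs.le, div_eq_mul_inv]

lemma g_upper_small (hθ : 0 < θ) (hα0 : α < 0) (hα1 : α ≠ -1) {y : ℝ}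
    (hy : 0 < y) (hy1 : y ≤ 1) :
    g θ α y ≤ y^(α+1) / |α+1| + (2/|α+1| + θ⁻¹) := by
  have hne : α + 1 ≠ 0 := fun h => hα1 (by linarith)
  have habs : 0 < |α+1| := abs_pos.mpr hne
  have hint1 : IntegrableOn (fun u => Real.exp (-(θ*u)) * (y+u)^α) (Ioc (0:ℝ) 1) :=
    (integrand_integrable hθ hα0.le hy).mono_set Ioc_subset_Ioi_self
  have hint2 : IntegrableOn (fun u => Real.exp (-(θ*u)) * (y+u)^α) (Ioi (1:ℝ)) :=
    (integrand_integrable hθ hα0.le hy).mono_set (Ioi_subset_Ioi zero_le_one)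
  have hintr : IntegrableOn (fun u => (y+u)^α) (Ioc (0:ℝ) 1) := by
    refine (ContinuousOn.integrableOn_Icc ?_).mono_set Ioc_subset_Icc_self
    refine ContinuousOn.rpow_const ((continuous_const.add continuous_id).continuousOn) ?_
    intro u hu
    exact Or.inl (by simp at hu; intro h; nlinarith [hu.1])
  have hsplit : g θ α y = (∫ u in Ioc (0:ℝ) 1, Real.exp (-(θ*u)) * (y+u)^α)
      + ∫ u in Ioi (1:ℝ), Real.exp (-(θ*u)) * (y+u)^α := by
    rw [g, ← Ioc_union_Ioi_eq_Ioi (zero_le_one' ℝ)]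
    exact setIntegral_union (Ioc_disjoint_Ioi le_rfl) measurableSet_Ioi hint1 hint2
  have hp1 : (∫ u in Ioc (0:ℝ) 1, Real.exp (-(θ*u)) * (y+u)^α)
      ≤ ∫ u in Ioc (0:ℝ) 1, (y+u)^α := by
    refine setIntegral_mono_on hint1 hintr measurableSet_Ioc fun u hu => ?_
    refine mul_le_of_le_one_left (Real.rpow_nonneg (by nlinarith [hu.1]) _) ?_
    rw [Real.exp_le_one_iff]
    nlinarith [hu.1]
  have hval : (∫ u in Ioc (0:ℝ) 1, (y+u)^α)
      = ((y+1)^(α+1) - y^(α+1))/(α+1) := by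
    rw [← intervalIntegral.integral_of_le (zero_le_one' ℝ)]
    have hc : (∫ u in (0:ℝ)..1, (y+u)^α) = ∫ v in (y+0:ℝ)..(y+1:ℝ), v^α :=
      intervalIntegral.integral_comp_add_left (fun v => v^α) y
    rw [hc, add_zero]
    rw [integral_rpow (Or.inr ⟨hα1, ?_⟩)]
    rw [uIcc_of_le (by linarith)]
    intro hmem
    exact absurd hmem.1 (by linarith)
  have hvb : ((y+1)^(α+1) - y^(α+1))/(α+1) ≤ y^(α+1)/|α+1| + 2/|α+1| := by
    have hA : (0:ℝ) ≤ (y+1)^(α+1) := Real.rpow_nonneg (by linarith) _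
    have hB : (0:ℝ) ≤ y^(α+1) := Real.rpow_nonneg hy.le _
    rcases lt_or_gt_of_ne hne with hneg | hpos
    · rw [abs_of_neg hneg]
      have e : ((y+1)^(α+1) - y^(α+1))/(α+1)
          = (y^(α+1) - (y+1)^(α+1))/(-(α+1)) := by
        rw [div_neg, ← neg_div, neg_sub]
      rw [e, ← add_div]
      gcongr
      · linarith
      · linarith
    · rw [abs_of_pos hpos, ← add_div]
      have h1 : (y+1)^(α+1) ≤ 2 := by
        calc (y+1)^(α+1) ≤ (2:ℝ)^(α+1) :=
              Real.rpow_le_rpow (by linarith) (by linarith) hpos.le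
          _ ≤ (2:ℝ)^(1:ℝ) :=
              Real.rpow_le_rpow_of_exponent_le one_le_two (by linarith)
          _ = 2 := Real.rpow_one 2
      gcongr
      linarith
  have hp2 : (∫ u in Ioi (1:ℝ), Real.exp (-(θ*u)) * (y+u)^α) ≤ θ⁻¹ := by
    have b1 : (∫ u in Ioi (1:ℝ), Real.exp (-(θ*u)) * (y+u)^α)
        ≤ ∫ u in Ioi (1:ℝ), Real.exp (-(θ*u)) := by
      refine setIntegral_mono_on hint2 (exp_rate_integrable hθ 1) measurableSet_Ioi
        fun u hu => ?_
      have hu1 : (1:ℝ) < u := hu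
      calc Real.exp (-(θ*u)) * (y+u)^α
          ≤ Real.exp (-(θ*u)) * 1 := mul_le_mul_of_nonneg_left
            (Real.rpow_le_one_of_one_le_of_nonpos (by linarith) hα0.le) (Real.exp_pos _).le
        _ = _ := mul_one _
    have b2 : (∫ u in Ioi (1:ℝ), Real.exp (-(θ*u))) ≤ ∫ u in Ioi (0:ℝ), Real.exp (-(θ*u)) := by
      refine setIntegral_mono_set (exp_rate_integrable hθ 0) ?_ ?_
      · filter_upwards with u using (Real.exp_pos _).le
      · exact HasSubset.Subset.eventuallyLE (Ioi_subset_Ioi zero_le_one)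
    rw [integral_exp_rate hθ] at b2
    linarith
  rw [hsplit]
  have := hp1.trans (le_of_eq hval) |>.trans hvb
  linarith

lemma f_int01 (hθ : 0 < θ) (hα0 : α < 0) (hα2 : -2 < α) (hα1 : α ≠ -1) :
    IntegrableOn (fun y => Real.exp (θ*y) * g θ α y) (Ioc (0:ℝ) 1) := by
  refine Integrable.mono'
    (g := fun y => Real.exp θ * (y^(α+1) / |α+1| + (2/|α+1| + θ⁻¹))) ?_ ?_ ?_
  · refine Integrable.const_mul ?_ _
    refine Integrable.add ?_ (integrableOn_const measure_Ioc_lt_top.ne)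
    refine Integrable.div_const ?_ _
    have h := intervalIntegral.intervalIntegrable_rpow' (r := α+1) (by linarith)
      (a := 0) (b := 1)
    rwa [intervalIntegrable_iff_integrableOn_Ioc_of_le zero_le_one] at h
  · exact (((measurable_id.const_mul θ).exp).mul (measurable_g θ α)).aestronglyMeasurable
  · filter_upwards [ae_restrict_mem measurableSet_Ioc] with y hy
    have hy0 : 0 < y := hy.1
    have hg0 : 0 ≤ g θ α y := g_nonneg hy0.le
    rw [Real.norm_eq_abs, abs_of_nonneg (mul_nonneg (Real.exp_pos _).le hg0)]
    have h1 : Real.exp (θ*y) ≤ Real.exp θ := by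
      refine Real.exp_le_exp.mpr ?_
      nlinarith [hy.2]
    have h2 := g_upper_small hθ hα0 hα1 hy0 hy.2
    have hb : 0 ≤ y^(α+1)/|α+1| + (2/|α+1| + θ⁻¹) := by
      have := Real.rpow_nonneg hy0.le (α+1)
      have h3 : 0 ≤ y^(α+1)/|α+1| := div_nonneg this (abs_nonneg _)
      have h4 : (0:ℝ) ≤ 2/|α+1| := div_nonneg (by norm_num) (abs_nonneg _)
      have h5 : (0:ℝ) ≤ θ⁻¹ := inv_nonneg.mpr hθ.le
      linarith
    exact mul_le_mul h1 h2 hg0 (Real.exp_pos _).le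

lemma f_int1t (hθ : 0 < θ) (hα0 : α < 0) (t : ℝ) :
    IntegrableOn (fun y => Real.exp (θ*y) * g θ α y) (Ioc (1:ℝ) t) := by
  refine Integrable.mono' (g := fun _ => Real.exp (θ*t) * θ⁻¹)
    (integrableOn_const measure_Ioc_lt_top.ne)
    (((measurable_id.const_mul θ).exp).mul (measurable_g θ α)).aestronglyMeasurable ?_
  filter_upwards [ae_restrict_mem measurableSet_Ioc] with y hy
  have hy1 : (1:ℝ) ≤ y := hy.1.le
  have hy0 : (0:ℝ) < y := by linarith
  have hg0 : 0 ≤ g θ α y := g_nonneg hy0.le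
  rw [Real.norm_eq_abs, abs_of_nonneg (mul_nonneg (Real.exp_pos _).le hg0)]
  have h2 : g θ α y ≤ θ⁻¹ := by
    have hgy := g_le hθ hα0.le hy0
    have hy' : y^α ≤ 1 := Real.rpow_le_one_of_one_le_of_nonpos hy1 hα0.le
    have h5 : (0:ℝ) ≤ θ⁻¹ := inv_nonneg.mpr hθ.le
    nlinarith
  exact mul_le_mul (Real.exp_le_exp.mpr (mul_le_mul_of_nonneg_left hy.2 hθ.le)) h2 hg0
    (Real.exp_pos _).le

lemma K_tendsto (hθ : 0 < θ) (hα0 : α < 0) :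
    Tendsto (fun t : ℝ => ∫ u in Ioi (0:ℝ),
      indicator (Ioc (0:ℝ) (t-1))
        (fun u => θ^2 * t^(-α) * (Real.exp (-(θ*u)) * g θ α (t-u))) u)
      atTop (𝓝 1) := by
  have hlim : (∫ u in Ioi (0:ℝ), θ * Real.exp (-(θ*u))) = 1 := by
    rw [integral_const_mul, integral_exp_rate hθ, mul_inv_cancel₀ hθ.ne']
  have hDCT := tendsto_integral_filter_of_dominated_convergence
    (μ := volume.restrict (Ioi (0:ℝ))) (l := atTop)
    (F := fun (t : ℝ) (u : ℝ) => indicator (Ioc (0:ℝ) (t-1))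
        (fun u => θ^2 * t^(-α) * (Real.exp (-(θ*u)) * g θ α (t-u))) u)
    (f := fun u => θ * Real.exp (-(θ*u)))
    (fun u => θ * (2^(-α) + 1) * Real.exp (-(θ/2*u))) ?_ ?_ ?_ ?_
  · rwa [hlim] at hDCT
  · filter_upwards with t
    refine (Measurable.indicator ?_ measurableSet_Ioc).aestronglyMeasurable
    exact measurable_const.mul (((measurable_id.const_mul θ).neg.exp).mul
      ((measurable_g θ α).comp (measurable_const.sub measurable_id)))
  · have hev : ∀ᶠ t : ℝ in atTop, t^(-α) * Real.exp (-(θ/4) * t) ≤ 1 := by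
      have h := tendsto_rpow_mul_exp_neg_mul_atTop_nhds_zero (-α) (θ/4) (by positivity)
      exact h.eventually (eventually_le_nhds one_pos)
    filter_upwards [hev, eventually_ge_atTop (2:ℝ)] with t hsmall ht2
    filter_upwards [ae_restrict_mem measurableSet_Ioi] with u hu
    have hu0 : (0:ℝ) < u := hu
    have hbnd0 : (0:ℝ) ≤ θ * (2^(-α) + 1) * Real.exp (-(θ/2*u)) := by
      have : (0:ℝ) ≤ (2:ℝ)^(-α) := Real.rpow_nonneg (by norm_num) _
      positivity
    by_cases hmem : u ∈ Ioc (0:ℝ) (t-1)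
    · rw [indicator_of_mem hmem]
      have hs1 : (1:ℝ) ≤ t - u := by have := hmem.2; linarith
      have hs0 : (0:ℝ) < t - u := by linarith
      have ht0 : (0:ℝ) < t := by linarith
      have htα : (0:ℝ) < t^α := Real.rpow_pos_of_pos ht0 _
      have hg0 : 0 ≤ g θ α (t-u) := g_nonneg hs0.le
      have hgle : g θ α (t-u) ≤ (t-u)^α * θ⁻¹ := g_le hθ hα0.le hs0
      have hAnn : (0:ℝ) ≤ t^(-α) := Real.rpow_nonneg ht0.le _
      have hB0 : (0:ℝ) ≤ (t-u)^α := Real.rpow_nonneg hs0.le _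
      rw [Real.norm_eq_abs, abs_of_nonneg (by positivity)]
      have step1 : θ^2 * t^(-α) * (Real.exp (-(θ*u)) * g θ α (t-u))
          ≤ θ * (t^(-α) * (t-u)^α * Real.exp (-(θ*u))) := by
        have h := mul_le_mul_of_nonneg_left hgle (Real.exp_pos (-(θ*u))).le
        have h2 := mul_le_mul_of_nonneg_left h (by positivity : (0:ℝ) ≤ θ^2 * t^(-α))
        calc θ^2 * t^(-α) * (Real.exp (-(θ*u)) * g θ α (t-u))
            ≤ θ^2 * t^(-α) * (Real.exp (-(θ*u)) * ((t-u)^α * θ⁻¹)) := h2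
          _ = θ * (t^(-α) * (t-u)^α * Real.exp (-(θ*u))) := by
              field_simp
      have step2 : t^(-α) * (t-u)^α * Real.exp (-(θ*u))
          ≤ (2^(-α) + 1) * Real.exp (-(θ/2*u)) := by
        have hE : Real.exp (-(θ*u)) ≤ Real.exp (-(θ/2*u)) := by
          refine Real.exp_le_exp.mpr ?_
          nlinarith
        have h2nn : (0:ℝ) ≤ (2:ℝ)^(-α) := Real.rpow_nonneg (by norm_num) _
        have hE2 : (0:ℝ) ≤ Real.exp (-(θ/2*u)) := (Real.exp_pos _).le
        have hid : t^(-α) * t^α = 1 := by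
          rw [Real.rpow_neg ht0.le]
          exact inv_mul_cancel₀ htα.ne'
        by_cases hcase : u ≤ t/2
        · have hB : (t-u)^α ≤ (t/2)^α :=
            Real.rpow_le_rpow_of_nonpos (by linarith) (by linarith) hα0.le
          have hhalfeq : (t/2:ℝ)^α = t^α * (2:ℝ)^(-α) := by
            rw [Real.div_rpow ht0.le (by norm_num), Real.rpow_neg (by norm_num),
              div_eq_mul_inv]
          calc t^(-α) * (t-u)^α * Real.exp (-(θ*u))
              ≤ t^(-α) * (t/2)^α * Real.exp (-(θ*u)) := by
                have := mul_le_mul_of_nonneg_left hB hAnn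
                exact mul_le_mul_of_nonneg_right this (Real.exp_pos _).le
            _ = (2:ℝ)^(-α) * Real.exp (-(θ*u)) := by
                rw [hhalfeq, ← mul_assoc, hid, one_mul]
            _ ≤ (2:ℝ)^(-α) * Real.exp (-(θ/2*u)) := mul_le_mul_of_nonneg_left hE h2nn
            _ ≤ (2^(-α) + 1) * Real.exp (-(θ/2*u)) := by nlinarith
        · have hB1 : (t-u)^α ≤ 1 := Real.rpow_le_one_of_one_le_of_nonpos hs1 hα0.le
          have hEsplit : Real.exp (-(θ*u)) ≤ Real.exp (-(θ/2*u)) * Real.exp (-(θ/4) * t) := by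
            rw [← Real.exp_add]
            refine Real.exp_le_exp.mpr ?_
            nlinarith
          calc t^(-α) * (t-u)^α * Real.exp (-(θ*u))
              ≤ t^(-α) * 1 * Real.exp (-(θ*u)) := by
                have := mul_le_mul_of_nonneg_left hB1 hAnn
                exact mul_le_mul_of_nonneg_right this (Real.exp_pos _).le
            _ = t^(-α) * Real.exp (-(θ*u)) := by ring
            _ ≤ t^(-α) * (Real.exp (-(θ/2*u)) * Real.exp (-(θ/4) * t)) :=
                mul_le_mul_of_nonneg_left hEsplit hAnn
            _ = (t^(-α) * Real.exp (-(θ/4) * t)) * Real.exp (-(θ/2*u)) := by ring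
            _ ≤ 1 * Real.exp (-(θ/2*u)) := mul_le_mul_of_nonneg_right hsmall hE2
            _ ≤ (2^(-α) + 1) * Real.exp (-(θ/2*u)) := by nlinarith
      calc θ^2 * t^(-α) * (Real.exp (-(θ*u)) * g θ α (t-u))
          ≤ θ * (t^(-α) * (t-u)^α * Real.exp (-(θ*u))) := step1
        _ ≤ θ * ((2^(-α) + 1) * Real.exp (-(θ/2*u))) :=
            mul_le_mul_of_nonneg_left step2 hθ.le
        _ = θ * (2^(-α) + 1) * Real.exp (-(θ/2*u)) := by ring
    · rw [indicator_of_notMem hmem]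
      simpa using hbnd0
  · refine Integrable.const_mul ?_ _
    have h := exp_neg_integrableOn_Ioi 0 (half_pos hθ)
    simp only [neg_mul] at h
    exact h
  · filter_upwards [ae_restrict_mem measurableSet_Ioi] with u hu
    have hu0 : (0:ℝ) < u := hu
    have h1 : Tendsto (fun t : ℝ => g θ α (t-u) * (t-u)^(-α)) atTop (𝓝 θ⁻¹) := by
      have h := (g_tendsto hθ hα0.le).comp
        (tendsto_atTop_add_const_right atTop (-u) tendsto_id)
      simpa [Function.comp_def, sub_eq_add_neg] using h
    have h2 : Tendsto (fun t : ℝ => ((t-u)/t)^α) atTop (𝓝 1) := by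
      have h := (sub_ratio_tendsto u).rpow_const (p := α) (Or.inl one_ne_zero)
      rwa [Real.one_rpow] at h
    have h3 : Tendsto (fun t : ℝ => θ^2 * (Real.exp (-(θ*u)) *
        ((g θ α (t-u) * (t-u)^(-α)) * ((t-u)/t)^α))) atTop
        (𝓝 (θ^2 * (Real.exp (-(θ*u)) * (θ⁻¹ * 1)))) :=
      tendsto_const_nhds.mul (tendsto_const_nhds.mul (h1.mul h2))
    have heq : θ^2 * (Real.exp (-(θ*u)) * (θ⁻¹ * 1)) = θ * Real.exp (-(θ*u)) := by
      field_simp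
    rw [heq] at h3
    refine h3.congr' ?_
    filter_upwards [eventually_ge_atTop (u+1)] with t ht
    have hs1 : (1:ℝ) ≤ t - u := by linarith
    have hs0 : (0:ℝ) < t - u := by linarith
    have ht0 : (0:ℝ) < t := by linarith
    have hmem : u ∈ Ioc (0:ℝ) (t-1) := ⟨hu0, by linarith⟩
    rw [indicator_of_mem hmem]
    have hB : (0:ℝ) < (t-u)^α := Real.rpow_pos_of_pos hs0 _
    have htα : (0:ℝ) < t^α := Real.rpow_pos_of_pos ht0 _
    rw [Real.div_rpow hs0.le ht0.le, Real.rpow_neg hs0.le, Real.rpow_neg ht0.le, div_eq_mul_inv]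
    field_simp

end Stmt1Aux

open Stmt1Aux in
theorem stmt_1 (γ θ : ℝ) (hγ0 : 0 < γ) (hγ1 : γ < 1) (hγhalf : γ ≠ 1/2) (hθ : 0 < θ) :
    Tendsto (fun t : ℝ =>
      (Real.exp (-θ * t) *
        ∫ y in Icc (0:ℝ) t, ∫ x in Iic (0:ℝ),
          Real.exp (θ * x) * Real.exp (θ * y) * (y - x) ^ (2 * γ - 2))
      / (t ^ (2 * γ - 2) / θ ^ 2)) atTop (nhds 1) := by
  set α : ℝ := 2 * γ - 2 with hαdef
  have hα0 : α < 0 := by rw [hαdef]; linarith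
  have hα2 : -2 < α := by rw [hαdef]; linarith
  have hα1 : α ≠ -1 := by
    rw [hαdef]
    intro h
    exact hγhalf (by linarith)
  set C0 : ℝ := ∫ y in Ioc (0:ℝ) 1, Real.exp (θ*y) * g θ α y with hC0def
  have hzero : Tendsto (fun t : ℝ => C0 * θ^2 * (t^(-α) * Real.exp (-θ * t)))
      atTop (𝓝 (C0 * θ^2 * 0)) := by
    exact (tendsto_rpow_mul_exp_neg_mul_atTop_nhds_zero (-α) θ hθ).const_mul _
  rw [mul_zero] at hzero
  have hmain : Tendsto (fun t : ℝ => C0 * θ^2 * (t^(-α) * Real.exp (-θ * t)) +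
      ∫ u in Ioi (0:ℝ), indicator (Ioc (0:ℝ) (t-1))
        (fun u => θ^2 * t^(-α) * (Real.exp (-(θ*u)) * g θ α (t-u))) u)
      atTop (𝓝 (0 + 1)) := hzero.add (K_tendsto hθ hα0)
  rw [zero_add] at hmain
  refine hmain.congr' ?_
  filter_upwards [eventually_ge_atTop (1:ℝ)] with t ht
  have ht0 : (0:ℝ) < t := by linarith
  have htα : (0:ℝ) < t^α := Real.rpow_pos_of_pos ht0 _
  -- Step A: inner integral evaluation
  have h1 : (∫ y in Icc (0:ℝ) t, ∫ x in Iic (0:ℝ),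
        Real.exp (θ * x) * Real.exp (θ * y) * (y - x) ^ α)
      = ∫ y in Icc (0:ℝ) t, Real.exp (θ*y) * g θ α y := by
    refine setIntegral_congr_ae measurableSet_Icc ?_
    have h0 : ∀ᵐ y : ℝ, y ≠ (0:ℝ) := by
      rw [ae_iff]
      simp only [not_not]
      have : {y : ℝ | y = 0} = {0} := by ext y; simp
      rw [this]
      exact measure_singleton 0
    filter_upwards [h0] with y hy0 hyIcc
    have hy : 0 < y := lt_of_le_of_ne hyIcc.1 (Ne.symm hy0)
    have e1 : ∀ x : ℝ, Real.exp (θ*x) * Real.exp (θ*y) * (y-x)^α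
        = Real.exp (θ*y) * (Real.exp (θ*x) * (y-x)^α) := fun x => by ring
    simp_rw [e1]
    rw [integral_const_mul]
    congr 1
    have hrefl := integral_comp_neg_Ioi (0:ℝ) (fun x => Real.exp (θ*x) * (y-x)^α)
    rw [neg_zero] at hrefl
    rw [← hrefl, g]
    refine setIntegral_congr_fun measurableSet_Ioi fun u hu => ?_
    have : y - -u = y + u := by ring
    rw [this]
    congr 2
    ring
  -- Step B: split the integral
  have hI1 : IntervalIntegrable (fun y => Real.exp (θ*y) * g θ α y) volume 0 1 :=
    (intervalIntegrable_iff_integrableOn_Ioc_of_le zero_le_one).mpr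
      (f_int01 hθ hα0 hα2 hα1)
  have hI2 : IntervalIntegrable (fun y => Real.exp (θ*y) * g θ α y) volume 1 t :=
    (intervalIntegrable_iff_integrableOn_Ioc_of_le ht).mpr (f_int1t hθ hα0 t)
  have h2 : (∫ y in Icc (0:ℝ) t, Real.exp (θ*y) * g θ α y)
      = C0 + ∫ y in (1:ℝ)..t, Real.exp (θ*y) * g θ α y := by
    rw [integral_Icc_eq_integral_Ioc,
      ← intervalIntegral.integral_of_le (by linarith : (0:ℝ) ≤ t),
      ← intervalIntegral.integral_add_adjacent_intervals hI1 hI2,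
      intervalIntegral.integral_of_le zero_le_one]
  -- Step C: substitution y = t - u on [1, t]
  have h4 : (∫ y in (1:ℝ)..t, Real.exp (θ*y) * g θ α y)
      = ∫ u in (0:ℝ)..(t-1), Real.exp (θ*(t-u)) * g θ α (t-u) := by
    have hcs := intervalIntegral.integral_comp_sub_left (a := 0) (b := t-1)
      (fun y => Real.exp (θ*y) * g θ α y) t
    rw [sub_sub_cancel, sub_zero] at hcs
    exact hcs.symm
  -- Step D: identify the second term with the indicator integral
  have h5 : (∫ u in Ioi (0:ℝ), indicator (Ioc (0:ℝ) (t-1))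
        (fun u => θ^2 * t^(-α) * (Real.exp (-(θ*u)) * g θ α (t-u))) u)
      = θ^2 * (t^α)⁻¹ * Real.exp (-θ*t) *
        ∫ u in (0:ℝ)..(t-1), Real.exp (θ*(t-u)) * g θ α (t-u) := by
    rw [integral_indicator measurableSet_Ioc, Measure.restrict_restrict measurableSet_Ioc,
      inter_eq_left.mpr Ioc_subset_Ioi_self,
      ← intervalIntegral.integral_of_le (by linarith : (0:ℝ) ≤ t - 1),
      ← intervalIntegral.integral_const_mul]
    refine intervalIntegral.integral_congr fun u _ => ?_
    have he : Real.exp (-θ*t) * Real.exp (θ*(t-u)) = Real.exp (-(θ*u)) := by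
      rw [← Real.exp_add]
      congr 1
      ring
    rw [Real.rpow_neg ht0.le]
    calc θ^2 * (t^α)⁻¹ * (Real.exp (-(θ*u)) * g θ α (t-u))
        = θ^2 * (t^α)⁻¹ * ((Real.exp (-θ*t) * Real.exp (θ*(t-u))) * g θ α (t-u)) := by
          rw [he]
      _ = θ^2 * (t^α)⁻¹ * Real.exp (-θ*t) * (Real.exp (θ*(t-u)) * g θ α (t-u)) := by
          ring
  -- Put everything together
  rw [h5, h1, h2, h4, Real.rpow_neg ht0.le]
  field_simp
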